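/- Optimistic forecaster is probabilistically tail calibrated: in the setting of the second-largest construction (G₁ stochastically smaller than G₂ a.s., λ a deterministic cdf, (U, L) independent of (G₁, G₂) with U uniform on (0,1) and L ∼ λ, Xⱼ = Gⱼ⁻¹(U), Y the second largest of (X₁, X₂, L)), assume additionally that G₁ is continuous almost surely, that E[1 − G₁(t)] > 0 for all t ∈ ℝ, and that lim_{y → ∞} (1 − λ(y))/E[1 − G₁(y)] = 0. Let the forecast be F = G₁. Then for every u ∈ [0,1], lim_{t → ∞} P(Z_F^{(t)} ≤ u, Y > t)/E[1 − F(t)] = u, i.e. F is probabilistically tail calibrated for Y. -/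

import Mathlib

open MeasureTheory ProbabilityTheory Filter Set Topology

noncomputable section

/-- Conditional probability of a set given a sub-σ-algebra, as a real-valued function. -/
def condProb {Ω : Type*} {m0 : MeasurableSpace Ω} (μ : Measure Ω) (m : MeasurableSpace Ω)
    (A : Set Ω) : Ω → ℝ :=
  μ[A.indicator (fun _ => (1 : ℝ))|m]

/-- The conditional forecast excess distribution `F_t`. -/
def excessCdf (F : ℝ → ℝ) (t x : ℝ) : ℝ :=
  if F t < 1 then (F (x + t) - F t) / (1 - F t) else 1

/-- The excess probability integral transform `Z_F^{(t)}`. -/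
def excessPIT {Ω : Type*} (F : Ω → ℝ → ℝ) (Y : Ω → ℝ) (t : ℝ) (ω : Ω) : ℝ :=
  excessCdf (F ω) t (Y ω - t)

/-- Upper endpoint `x_Y = sup {x : P(Y ≤ x) < 1}` of the outcome, in `EReal`. -/
def upperEndpoint {Ω : Type*} {mΩ : MeasurableSpace Ω} (μ : Measure Ω) (Y : Ω → ℝ) : EReal :=
  sSup (Real.toEReal '' {x : ℝ | μ {ω | Y ω ≤ x} < 1})

/-- Upper endpoint of a (deterministic) cdf. -/
def cdfEndpoint (F : ℝ → ℝ) : EReal :=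
  sSup (Real.toEReal '' {x : ℝ | F x < 1})

/-- The filter of real `t` tending to an extended-real endpoint `e` from below. -/
def toEndpoint (e : EReal) : Filter ℝ :=
  Filter.comap Real.toEReal (𝓝[<] e)

/-- `F` is a random cdf: measurable in `ω`, and almost surely a continuous cdf. -/
def IsRandomCdf {Ω : Type*} {mΩ : MeasurableSpace Ω} (μ : Measure Ω) (F : Ω → ℝ → ℝ) : Prop :=
  (∀ x : ℝ, Measurable fun ω => F ω x) ∧
    ∀ᵐ ω ∂μ, Monotone (F ω) ∧ Continuous (F ω) ∧
      Tendsto (F ω) atTop (𝓝 1) ∧ Tendsto (F ω) atBot (𝓝 0)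

/-- The endpoint assumption for a sub-σ-algebra `m`: the conditional distribution of `Y`
given `m` has (non-random) upper endpoint `x_Y`. -/
def EndpointAssumption {Ω : Type*} {m0 : MeasurableSpace Ω} (μ : Measure Ω)
    (m : MeasurableSpace Ω) (Y : Ω → ℝ) : Prop :=
  (∀ t : ℝ, (t : EReal) < upperEndpoint μ Y →
      ∀ᵐ ω ∂μ, 0 < condProb μ m {ω' | t < Y ω'} ω) ∧
    ∀ᵐ ω ∂μ, condProb μ m {ω' | upperEndpoint μ Y < (Y ω' : EReal)} ω = 0

/-- `F` is tail `m`-calibrated for `Y`. -/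
def TailCalibrated {Ω : Type*} {m0 : MeasurableSpace Ω} (μ : Measure Ω)
    (m : MeasurableSpace Ω) (F : Ω → ℝ → ℝ) (Y : Ω → ℝ) : Prop :=
  (∀ t : ℝ, (t : EReal) < upperEndpoint μ Y →
      ∀ᵐ ω ∂μ, 0 < (μ[fun ω' => 1 - F ω' t|m]) ω) ∧
    ∀ u ∈ Icc (0 : ℝ) 1, ∀ᵐ ω ∂μ,
      Tendsto (fun t : ℝ =>
          condProb μ m {ω' | excessPIT F Y t ω' ≤ u ∧ t < Y ω'} ω /
            (μ[fun ω' => 1 - F ω' t|m]) ω)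
        (toEndpoint (upperEndpoint μ Y)) (𝓝 u)

/-- `F` is probabilistically tail calibrated for `Y`. -/
def ProbTailCalibrated {Ω : Type*} {mΩ : MeasurableSpace Ω} (μ : Measure Ω)
    (F : Ω → ℝ → ℝ) (Y : Ω → ℝ) : Prop :=
  (∀ t : ℝ, (t : EReal) < upperEndpoint μ Y → 0 < ∫ ω, (1 - F ω t) ∂μ) ∧
    ∀ u ∈ Icc (0 : ℝ) 1,
      Tendsto (fun t : ℝ =>
          (μ {ω | excessPIT F Y t ω ≤ u ∧ t < Y ω}).toReal / ∫ ω, (1 - F ω t) ∂μ)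
        (toEndpoint (upperEndpoint μ Y)) (𝓝 u)

/-- `F` is marginally tail calibrated for `Y`. -/
def MargTailCalibrated {Ω : Type*} {mΩ : MeasurableSpace Ω} (μ : Measure Ω)
    (F : Ω → ℝ → ℝ) (Y : Ω → ℝ) : Prop :=
  (∀ t : ℝ, (t : EReal) < upperEndpoint μ Y → 0 < ∫ ω, (1 - F ω t) ∂μ) ∧
    Tendsto (fun t : ℝ =>
        ⨆ x : Ici (0 : ℝ),
          |(μ {ω | t < Y ω ∧ Y ω ≤ t + (x : ℝ)}).toReal / (∫ ω, (1 - F ω t) ∂μ) -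
            (∫ ω in {ω' | t < Y ω'}, excessCdf (F ω) t (x : ℝ) ∂μ) /
              (μ {ω' | t < Y ω'}).toReal|)
      (toEndpoint (upperEndpoint μ Y)) (𝓝 0)

/-- Generalized Pareto survival function `(1 + ξ x)₊^(-1/ξ)` with unit scale and shape `ξ`,
interpreted as `exp (-x)` when `ξ = 0`. -/
def gpdSurv (ξ x : ℝ) : ℝ :=
  if ξ = 0 then Real.exp (-x) else (max (1 + ξ * x) 0) ^ (-(1 : ℝ) / ξ)

/-- The (generalized inverse) quantile function of a cdf. -/
def qfun (G : ℝ → ℝ) (u : ℝ) : ℝ :=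
  sInf {y : ℝ | u ≤ G y}

/-- The second largest (i.e. the median) of three real numbers. -/
def secondLargest (p q r : ℝ) : ℝ :=
  max (min p q) (min (max p q) r)

/-- `G` is a random cdf: coordinatewise measurable, and almost surely a monotone,
right-continuous cdf. -/
def IsRandomCdfRC {Ω : Type*} {mΩ : MeasurableSpace Ω} (μ : Measure Ω)
    (G : Ω → ℝ → ℝ) : Prop :=
  (∀ x : ℝ, Measurable fun ω => G ω x) ∧
    ∀ᵐ ω ∂μ, Monotone (G ω) ∧ (∀ x : ℝ, ContinuousWithinAt (G ω) (Ici x) x) ∧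
      Tendsto (G ω) atTop (𝓝 1) ∧ Tendsto (G ω) atBot (𝓝 0)

/-- The σ-algebra generated by the pair of random cdfs `(G₁, G₂)`. -/
def sigmaOfPair {Ω : Type*} (G₁ G₂ : Ω → ℝ → ℝ) : MeasurableSpace Ω :=
  MeasurableSpace.comap (fun ω => (G₁ ω, G₂ ω)) inferInstance

lemma qfun_le_iff {G : ℝ → ℝ} (hm : Monotone G)
    (hrc : ∀ x : ℝ, ContinuousWithinAt G (Ici x) x)
    (htop : Tendsto G atTop (𝓝 1)) (hbot : Tendsto G atBot (𝓝 0))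
    {u : ℝ} (hu0 : 0 < u) (hu1 : u < 1) (t : ℝ) :
    qfun G u ≤ t ↔ u ≤ G t := by
  set S : Set ℝ := {y : ℝ | u ≤ G y} with hS
  have hne : S.Nonempty := by
    obtain ⟨y, hy⟩ := (htop.eventually (eventually_ge_nhds hu1)).exists
    exact ⟨y, hy⟩
  have hbdd : BddBelow S := by
    obtain ⟨y₀, hy₀⟩ := (hbot.eventually (eventually_lt_nhds hu0)).exists
    refine ⟨y₀, fun y hy => ?_⟩
    by_contra h
    push_neg at h
    exact absurd (hy.trans (hm h.le)) (not_le.mpr hy₀)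
  constructor
  · intro h
    have h1 : ∀ y ∈ Ioi (qfun G u), u ≤ G y := by
      intro y hy
      obtain ⟨s, hs, hsy⟩ := exists_lt_of_csInf_lt hne hy
      exact hs.trans (hm hsy.le)
    have h2 : Tendsto G (𝓝[>] (qfun G u)) (𝓝 (G (qfun G u))) :=
      (hrc (qfun G u)).mono_left (nhdsWithin_mono _ Ioi_subset_Ici_self)
    have h3 : u ≤ G (qfun G u) :=
      ge_of_tendsto h2 (eventually_nhdsWithin_of_forall h1)
    exact h3.trans (hm h)
  · intro h
    exact csInf_le hbdd h

lemma cdf_qfun {G : ℝ → ℝ} (hm : Monotone G) (hc : Continuous G)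
    (htop : Tendsto G atTop (𝓝 1)) (hbot : Tendsto G atBot (𝓝 0))
    {u : ℝ} (hu0 : 0 < u) (hu1 : u < 1) :
    G (qfun G u) = u := by
  have hrc : ∀ x : ℝ, ContinuousWithinAt G (Ici x) x := fun x =>
    (hc.continuousAt).continuousWithinAt
  have hge : u ≤ G (qfun G u) :=
    ((qfun_le_iff hm hrc htop hbot hu0 hu1 (qfun G u)).mp le_rfl)
  have hle : G (qfun G u) ≤ u := by
    have hbdd : BddBelow {y : ℝ | u ≤ G y} := by
      obtain ⟨y₀, hy₀⟩ := (hbot.eventually (eventually_lt_nhds hu0)).exists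
      refine ⟨y₀, fun z hz => ?_⟩
      by_contra hzy
      push_neg at hzy
      exact absurd ((hz : u ≤ G z).trans (hm hzy.le)) (not_le.mpr hy₀)
    have h1 : ∀ y ∈ Iio (qfun G u), G y ≤ u := by
      intro y hy
      by_contra h
      push_neg at h
      have hyS : y ∈ {z : ℝ | u ≤ G z} := h.le
      exact absurd (csInf_le hbdd hyS) (not_le.mpr hy)
    have h2 : Tendsto G (𝓝[<] (qfun G u)) (𝓝 (G (qfun G u))) :=
      (hc.continuousAt).continuousWithinAt
    exact le_of_tendsto h2 (eventually_nhdsWithin_of_forall h1)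
  linarith

lemma unif_prob {Ω : Type*} {mΩ : MeasurableSpace Ω} (μ : Measure Ω) [IsProbabilityMeasure μ]
    {U V : Ω → ℝ} (hU : Measurable U) (hV : Measurable V)
    (hVr : ∀ ω, V ω ∈ Icc (0 : ℝ) 1)
    (hUunif : ∀ u ∈ Icc (0 : ℝ) 1, μ {ω | U ω ≤ u} = ENNReal.ofReal u)
    (hind : IndepFun U V μ) :
    (μ {ω | U ω ≤ V ω}).toReal = ∫ ω, V ω ∂μ := by
  have hind' : IndepFun V U μ := hind.symm
  have hmap : μ.map (fun ω => (V ω, U ω)) = (μ.map V).prod (μ.map U) :=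
    (indepFun_iff_map_prod_eq_prod_map_map hV.aemeasurable hU.aemeasurable).mp hind'
  have hsm : MeasurableSet {p : ℝ × ℝ | p.2 ≤ p.1} :=
    measurableSet_le measurable_snd measurable_fst
  have h1 : μ {ω | U ω ≤ V ω} = μ.map (fun ω => (V ω, U ω)) {p : ℝ × ℝ | p.2 ≤ p.1} := by
    rw [Measure.map_apply (hV.prodMk hU) hsm]
    rfl
  rw [h1, hmap, Measure.prod_apply hsm]
  have h2 : ∀ v : ℝ, Prod.mk v ⁻¹' {p : ℝ × ℝ | p.2 ≤ p.1} = Iic v := by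
    intro v; ext x; simp [Set.mem_setOf_eq]
  have h3 : ∀ᵐ v ∂(μ.map V), (μ.map U) (Prod.mk v ⁻¹' {p : ℝ × ℝ | p.2 ≤ p.1})
      = ENNReal.ofReal v := by
    have hae : ∀ᵐ v ∂(μ.map V), v ∈ Icc (0 : ℝ) 1 :=
      (ae_map_iff hV.aemeasurable measurableSet_Icc).mpr (Eventually.of_forall hVr)
    filter_upwards [hae] with v hv
    rw [h2 v, Measure.map_apply hU measurableSet_Iic]
    exact hUunif v hv
  rw [lintegral_congr_ae h3, lintegral_map (by fun_prop) hV]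
  have hint : Integrable V μ := by
    refine ⟨hV.aestronglyMeasurable, ?_⟩
    refine HasFiniteIntegral.mono' (hasFiniteIntegral_const (1 : ℝ)) ?_
    filter_upwards with ω
    rw [Real.norm_eq_abs, abs_le]
    exact ⟨by linarith [(hVr ω).1], (hVr ω).2⟩
  rw [← ofReal_integral_eq_lintegral_ofReal hint (Eventually.of_forall fun ω => (hVr ω).1),
    ENNReal.toReal_ofReal (integral_nonneg fun ω => (hVr ω).1)]

lemma integrable_of_Icc01 {Ω : Type*} {mΩ : MeasurableSpace Ω} (μ : Measure Ω)
    [IsProbabilityMeasure μ] {V : Ω → ℝ} (hV : Measurable V)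
    (h : ∀ ω, V ω ∈ Icc (0 : ℝ) 1) : Integrable V μ := by
  refine ⟨hV.aestronglyMeasurable, ?_⟩
  refine HasFiniteIntegral.mono' (hasFiniteIntegral_const (1 : ℝ)) ?_
  filter_upwards with ω
  rw [Real.norm_eq_abs, abs_le]
  exact ⟨by linarith [(h ω).1], (h ω).2⟩

/-- the optimistic forecaster `F = G₁` is probabilistically tail calibrated for
the second largest of `(X₁, X₂, L)`, provided `(1 - λ(y))/E[1 - G₁(y)] → 0`. -/
theorem optimistic_forecaster_probTailCalibrated
    {Ω : Type*} {m0 : MeasurableSpace Ω} (μ : Measure Ω) [IsProbabilityMeasure μ]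
    (G₁ G₂ : Ω → ℝ → ℝ) (hG₁ : IsRandomCdfRC μ G₁) (hG₂ : IsRandomCdfRC μ G₂)
    (hG₁cont : ∀ᵐ ω ∂μ, Continuous (G₁ ω))
    (hstoch : ∀ᵐ ω ∂μ, ∀ u ∈ Ioo (0 : ℝ) 1, qfun (G₁ ω) u ≤ qfun (G₂ ω) u)
    (lam : ℝ → ℝ) (hlammono : Monotone lam)
    (hlamtop : Tendsto lam atTop (𝓝 1)) (hlambot : Tendsto lam atBot (𝓝 0))
    (U L : Ω → ℝ) (hU : Measurable U) (hL : Measurable L)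
    (hUunif : ∀ u ∈ Icc (0 : ℝ) 1, μ {ω | U ω ≤ u} = ENNReal.ofReal u)
    (hUrange : μ {ω | 0 < U ω ∧ U ω < 1} = 1)
    (hLlaw : ∀ y : ℝ, (μ {ω | L ω ≤ y}).toReal = lam y)
    (hULindep : IndepFun U L μ)
    (hindep : IndepFun (fun ω => (U ω, L ω)) (fun ω => (G₁ ω, G₂ ω)) μ)
    (Y : Ω → ℝ)
    (hYdef : ∀ ω, Y ω = secondLargest (qfun (G₁ ω) (U ω)) (qfun (G₂ ω) (U ω)) (L ω))
    (hpos : ∀ t : ℝ, 0 < ∫ ω, (1 - G₁ ω t) ∂μ)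
    (hlam0 : Tendsto (fun y : ℝ => (1 - lam y) / ∫ ω, (1 - G₁ ω y) ∂μ) atTop (𝓝 0)) :
    ∀ u ∈ Icc (0 : ℝ) 1,
      Tendsto (fun t : ℝ =>
          (μ {ω | excessPIT G₁ Y t ω ≤ u ∧ t < Y ω}).toReal /
            ∫ ω, (1 - G₁ ω t) ∂μ)
        atTop (𝓝 u) := by
  intro u hu
  obtain ⟨hu0, hu1⟩ := hu
  -- the almost-everywhere good event
  have hUae : ∀ᵐ ω ∂μ, 0 < U ω ∧ U ω < 1 := by
    have hS : MeasurableSet {ω | 0 < U ω ∧ U ω < 1} :=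
      (measurableSet_lt measurable_const hU).inter (measurableSet_lt hU measurable_const)
    have hc : μ {ω | 0 < U ω ∧ U ω < 1}ᶜ = 0 := (prob_compl_eq_zero_iff hS).mpr hUrange
    rw [ae_iff]
    simpa [Set.compl_setOf] using hc
  have hP : ∀ᵐ ω ∂μ, (Monotone (G₁ ω) ∧ (∀ x : ℝ, ContinuousWithinAt (G₁ ω) (Ici x) x) ∧
      Tendsto (G₁ ω) atTop (𝓝 1) ∧ Tendsto (G₁ ω) atBot (𝓝 0)) ∧ Continuous (G₁ ω) ∧
      (0 < U ω ∧ U ω < 1) ∧ qfun (G₁ ω) (U ω) ≤ qfun (G₂ ω) (U ω) := by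
    filter_upwards [hG₁.2, hG₁cont, hstoch, hUae] with ω h1 h2 h3 h4
    exact ⟨h1, h2, h4, h3 (U ω) ⟨h4.1, h4.2⟩⟩
  set Eg : Set Ω := {ω | (Monotone (G₁ ω) ∧ (∀ x : ℝ, ContinuousWithinAt (G₁ ω) (Ici x) x) ∧
      Tendsto (G₁ ω) atTop (𝓝 1) ∧ Tendsto (G₁ ω) atBot (𝓝 0)) ∧ Continuous (G₁ ω) ∧
      (0 < U ω ∧ U ω < 1) ∧ qfun (G₁ ω) (U ω) ≤ qfun (G₂ ω) (U ω)} with hEg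
  have hEgc : μ Egᶜ = 0 := by
    rw [ae_iff] at hP
    simpa [hEg, Set.compl_setOf] using hP
  -- the key bound for each t
  have key : ∀ t : ℝ,
      |(μ {ω | excessPIT G₁ Y t ω ≤ u ∧ t < Y ω}).toReal / (∫ ω, (1 - G₁ ω t) ∂μ) - u|
        ≤ (1 - lam t) / (∫ ω, (1 - G₁ ω t) ∂μ) := by
    intro t
    have hDpos : 0 < ∫ ω, (1 - G₁ ω t) ∂μ := hpos t
    set D : ℝ := ∫ ω, (1 - G₁ ω t) ∂μ with hDdef
    set V : Ω → ℝ := fun ω => G₁ ω t with hVdef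
    have hVm : Measurable V := hG₁.1 t
    set A : Set Ω := {ω | excessPIT G₁ Y t ω ≤ u ∧ t < Y ω} with hAdef
    set B : Set Ω := {ω | V ω < U ω ∧ U ω ≤ V ω + u * (1 - V ω)} with hBdef
    -- the pointwise equivalence on the good event
    have hequiv : ∀ ω ∈ Eg, min (qfun (G₂ ω) (U ω)) (L ω) ≤ t →
        ((excessPIT G₁ Y t ω ≤ u ∧ t < Y ω) ↔
          (V ω < U ω ∧ U ω ≤ V ω + u * (1 - V ω))) := by
      intro ω hE hmt
      obtain ⟨⟨hmono, hrc, htop, hbot⟩, hcont, ⟨hU0, hU1⟩, hq12⟩ := hE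
      set q1 : ℝ := qfun (G₁ ω) (U ω) with hq1def
      have hYω : Y ω = max q1 (min (qfun (G₂ ω) (U ω)) (L ω)) := by
        rw [hYdef ω]
        simp only [secondLargest]
        rw [← hq1def, min_eq_left hq12, max_eq_right hq12]
      have hgal : q1 ≤ t ↔ U ω ≤ V ω :=
        qfun_le_iff hmono hrc htop hbot hU0 hU1 t
      have hGq : G₁ ω q1 = U ω := cdf_qfun hmono hcont htop hbot hU0 hU1
      constructor
      · rintro ⟨hZ, hYt⟩
        rw [hYω] at hYt
        have hq1t : t < q1 := by
          rcases lt_max_iff.mp hYt with h | h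
          · exact h
          · exact absurd h (not_lt.mpr hmt)
        have hYq1 : Y ω = q1 := by
          rw [hYω]; exact max_eq_left (hmt.trans hq1t.le)
        have hVU : V ω < U ω := by
          by_contra h
          push_neg at h
          exact absurd (hgal.mpr h) (not_le.mpr hq1t)
        have hV1 : V ω < 1 := hVU.trans hU1
        refine ⟨hVU, ?_⟩
        have hZeq : excessPIT G₁ Y t ω = (U ω - V ω) / (1 - V ω) := by
          simp only [excessPIT, excessCdf]
          rw [if_pos hV1, show Y ω - t + t = Y ω from by ring, hYq1, hGq]
        rw [hZeq, div_le_iff₀ (by linarith : (0:ℝ) < 1 - V ω)] at hZ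
        linarith
      · rintro ⟨h1, h2⟩
        have hq1t : t < q1 := by
          by_contra h
          push_neg at h
          exact absurd (hgal.mp h) (not_le.mpr h1)
        have hYq1 : Y ω = q1 := by
          rw [hYω]; exact max_eq_left (hmt.trans hq1t.le)
        have hV1 : V ω < 1 := h1.trans hU1
        refine ⟨?_, by rw [hYq1]; exact hq1t⟩
        have hZeq : excessPIT G₁ Y t ω = (U ω - V ω) / (1 - V ω) := by
          simp only [excessPIT, excessCdf]
          rw [if_pos hV1, show Y ω - t + t = Y ω from by ring, hYq1, hGq]
        rw [hZeq, div_le_iff₀ (by linarith : (0:ℝ) < 1 - V ω)]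
        linarith
    -- inclusions
    have hAB : A ⊆ B ∪ ({ω | t < L ω} ∪ Egᶜ) := by
      intro ω hω
      by_cases hE : ω ∈ Eg
      · by_cases hmt : min (qfun (G₂ ω) (U ω)) (L ω) ≤ t
        · exact Or.inl ((hequiv ω hE hmt).mp hω)
        · push_neg at hmt
          exact Or.inr (Or.inl (lt_min_iff.mp hmt).2)
      · exact Or.inr (Or.inr hE)
    have hBA : B ⊆ A ∪ ({ω | t < L ω} ∪ Egᶜ) := by
      intro ω hω
      by_cases hE : ω ∈ Eg
      · by_cases hmt : min (qfun (G₂ ω) (U ω)) (L ω) ≤ t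
        · exact Or.inl ((hequiv ω hE hmt).mpr hω)
        · push_neg at hmt
          exact Or.inr (Or.inl (lt_min_iff.mp hmt).2)
      · exact Or.inr (Or.inr hE)
    have hmeasineq : ∀ {S T : Set Ω}, S ⊆ T ∪ ({ω | t < L ω} ∪ Egᶜ) →
        μ S ≤ μ T + μ {ω | t < L ω} := by
      intro S T hST
      calc μ S ≤ μ (T ∪ ({ω | t < L ω} ∪ Egᶜ)) := measure_mono hST
        _ ≤ μ T + μ ({ω | t < L ω} ∪ Egᶜ) := measure_union_le _ _
        _ ≤ μ T + (μ {ω | t < L ω} + μ Egᶜ) := by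
            exact add_le_add le_rfl (measure_union_le _ _)
        _ = μ T + μ {ω | t < L ω} := by rw [hEgc, add_zero]
    -- the tail of L
    have hLtail : (μ {ω | t < L ω}).toReal = 1 - lam t := by
      have h1 : {ω | t < L ω} = {ω | L ω ≤ t}ᶜ := by
        ext ω; simp [not_le]
      have h2 : MeasurableSet {ω | L ω ≤ t} := hL measurableSet_Iic
      rw [h1, measure_compl h2 (measure_ne_top μ _), measure_univ,
        ENNReal.toReal_sub_of_le prob_le_one ENNReal.one_ne_top,
        ENNReal.toReal_one, hLlaw t]
    -- clamped version of V
    set Vc : Ω → ℝ := fun ω => max 0 (min (V ω) 1) with hVcdef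
    have hVcm : Measurable Vc := measurable_const.max (hVm.min measurable_const)
    have hVc01 : ∀ ω, Vc ω ∈ Icc (0:ℝ) 1 := fun ω =>
      ⟨le_max_left _ _, max_le (by norm_num) (min_le_right _ _)⟩
    have hVVc : ∀ᵐ ω ∂μ, V ω = Vc ω := by
      filter_upwards [hG₁.2] with ω ⟨hmono, _, htop, hbot⟩
      have h0 : 0 ≤ V ω :=
        le_of_tendsto hbot (eventually_atBot.mpr ⟨t, fun y hy => hmono hy⟩)
      have h1 : V ω ≤ 1 :=
        ge_of_tendsto htop (eventually_atTop.mpr ⟨t, fun y hy => hmono hy⟩)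
      simp [hVcdef, min_eq_left h1, max_eq_right h0]
    set W : Ω → ℝ := fun ω => Vc ω + u * (1 - Vc ω) with hWdef
    have hWm : Measurable W := hVcm.add ((measurable_const.sub hVcm).const_mul u)
    have hW01 : ∀ ω, W ω ∈ Icc (0:ℝ) 1 := by
      intro ω
      obtain ⟨h0, h1⟩ := hVc01 ω
      refine ⟨?_, ?_⟩ <;> simp only [hWdef] <;> nlinarith
    -- independence
    have hUV : IndepFun U V μ := by
      have h := hindep.comp (measurable_fst : Measurable (Prod.fst : ℝ × ℝ → ℝ))
        ((measurable_pi_apply t).comp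
          (measurable_fst : Measurable (Prod.fst : (ℝ → ℝ) × (ℝ → ℝ) → (ℝ → ℝ))))
      exact h
    have hUVc : IndepFun U Vc μ := by
      have h := hUV.comp (measurable_id : Measurable (id : ℝ → ℝ))
        ((measurable_const.max (measurable_id.min measurable_const)) :
          Measurable (fun x : ℝ => max 0 (min x 1)))
      exact h
    have hUW : IndepFun U W μ := by
      have h := hUVc.comp (measurable_id : Measurable (id : ℝ → ℝ))
        ((measurable_id.add ((measurable_const.sub measurable_id).const_mul u)) :
          Measurable (fun x : ℝ => x + u * (1 - x)))
      exact h
    -- computation of μ B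
    set B' : Set Ω := {ω | Vc ω < U ω ∧ U ω ≤ W ω} with hB'def
    have hBB' : μ B = μ B' := by
      refine measure_congr (eventuallyEq_set.mpr ?_)
      filter_upwards [hVVc] with ω h
      simp only [hBdef, hB'def, Set.mem_setOf_eq, hWdef, h]
    have hsub : {ω | U ω ≤ Vc ω} ⊆ {ω | U ω ≤ W ω} := by
      intro ω hω
      have h1 := (hVc01 ω).2
      have : Vc ω ≤ W ω := by simp only [hWdef]; nlinarith
      exact le_trans hω this
    have hdiff : B' = {ω | U ω ≤ W ω} \ {ω | U ω ≤ Vc ω} := by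
      ext ω
      simp only [hB'def, Set.mem_setOf_eq, Set.mem_diff, not_le]
      tauto
    have hμB' : μ B' = μ {ω | U ω ≤ W ω} - μ {ω | U ω ≤ Vc ω} := by
      rw [hdiff]
      exact measure_diff hsub (measurableSet_le hU hVcm).nullMeasurableSet (measure_ne_top μ _)
    have hIVc : Integrable Vc μ := integrable_of_Icc01 μ hVcm hVc01
    have hI1Vc : Integrable (fun ω => 1 - Vc ω) μ := (integrable_const 1).sub hIVc
    have hintW : ∫ ω, W ω ∂μ = ∫ ω, Vc ω ∂μ + u * ∫ ω, (1 - Vc ω) ∂μ := by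
      simp only [hWdef]
      rw [integral_add hIVc (hI1Vc.const_mul u), integral_const_mul]
    have h1VcD : ∫ ω, (1 - Vc ω) ∂μ = D := by
      rw [hDdef]
      refine integral_congr_ae ?_
      filter_upwards [hVVc] with ω h
      rw [← h]
    have hμBval : (μ B).toReal = u * D := by
      rw [hBB', hμB',
        ENNReal.toReal_sub_of_le (measure_mono hsub) (measure_ne_top μ _),
        unif_prob μ hU hWm hW01 hUunif hUW, unif_prob μ hU hVcm hVc01 hUunif hUVc,
        hintW, h1VcD]
      ring
    -- combine
    have h1 : μ A ≤ μ B + μ {ω | t < L ω} := hmeasineq hAB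
    have h2 : μ B ≤ μ A + μ {ω | t < L ω} := hmeasineq hBA
    have hfin : ∀ S : Set Ω, μ S ≠ ⊤ := fun S => measure_ne_top μ S
    have h1r : (μ A).toReal ≤ (μ B).toReal + (1 - lam t) := by
      have := ENNReal.toReal_mono (by
        exact ENNReal.add_ne_top.mpr ⟨hfin _, hfin _⟩) h1
      rwa [ENNReal.toReal_add (hfin _) (hfin _), hLtail] at this
    have h2r : (μ B).toReal ≤ (μ A).toReal + (1 - lam t) := by
      have := ENNReal.toReal_mono (by
        exact ENNReal.add_ne_top.mpr ⟨hfin _, hfin _⟩) h2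
      rwa [ENNReal.toReal_add (hfin _) (hfin _), hLtail] at this
    have habs : |(μ A).toReal - u * D| ≤ 1 - lam t := by
      rw [abs_le]
      constructor <;> [nlinarith [hμBval, h2r]; nlinarith [hμBval, h1r]]
    have heq : (μ A).toReal / D - u = ((μ A).toReal - u * D) / D := by
      field_simp
    rw [heq, abs_div, abs_of_pos hDpos]
    exact (div_le_div_iff_of_pos_right hDpos).mpr habs
  -- conclude by squeezing
  have hsq : Tendsto (fun t : ℝ =>
      (μ {ω | excessPIT G₁ Y t ω ≤ u ∧ t < Y ω}).toReal / (∫ ω, (1 - G₁ ω t) ∂μ) - u)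
      atTop (𝓝 0) := by
    refine squeeze_zero_norm (fun t => ?_) hlam0
    simpa [Real.norm_eq_abs] using key t
  have := hsq.add (tendsto_const_nhds (x := u))
  simpa using this
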